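/- Every strategy σ on a justified AJM game A has a skeleton; moreover, for every s ∈ σ, σ has a skeleton containing s. -/
import Mathlib


/- Justified AJM games, after Abramsky's game semantics for access control. -/

namespace AJM

inductive Pol where
  | P
  | O
deriving DecidableEq

inductive QA where
  | Q
  | Ans
deriving DecidableEq

def Pol.flip : Pol → Pol
  | .P => .O
  | .O => .P

/-- Well-bracketed strings over moves (condition (p4)). -/
inductive WB {M : Type} (lab : M → Pol × QA) (just : M → Option M) : List M → Prop
  | nil : WB lab just []
  | wrap (a q : M) (u : List M) : (lab a).2 = QA.Ans → just a = some q →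
      WB lab just u → WB lab just (q :: (u ++ [a]))
  | append (u v : List M) : WB lab just u → WB lab just v → WB lab just (u ++ v)

/-- Conditions (p1)–(p5): Opponent starts, alternation, linearity,
well-bracketing, justifiers occur before their moves. -/
def ValidSeq {M : Type} (lab : M → Pol × QA) (just : M → Option M) (s : List M) : Prop :=
  (∀ m, s.head? = some m → (lab m).1 = Pol.O) ∧
  List.Chain' (fun m m' => (lab m).1 ≠ (lab m').1) s ∧
  s.Nodup ∧
  (∃ t, s <+: t ∧ WB lab just t) ∧
  (∀ s₁ m s₂, s = s₁ ++ m :: s₂ → ∀ m', just m = some m' → m' ∈ s₁)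

/-- A justified AJM game (the data). -/
structure Game where
  M : Type
  lab : M → Pol × QA
  just : M → Option M
  pos : Set (List M)
  equiv : List M → List M → Prop

namespace Game

/-- The axioms making the data of a `Game` an actual justified AJM game. -/
structure Valid (A : Game) : Prop where
  just_wf : WellFounded fun m m' : A.M => A.just m' = some m
  just_pol : ∀ m m', A.just m = some m' → (A.lab m).1 ≠ (A.lab m').1
  just_qa : ∀ m m', A.just m = some m' → (A.lab m).2 = QA.Ans → (A.lab m').2 = QA.Q
  ans_justified : ∀ m, (A.lab m).2 = QA.Ans → A.just m ≠ none
  pos_nonempty : A.pos.Nonempty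
  pos_prefix_closed : ∀ s t : List A.M, s <+: t → t ∈ A.pos → s ∈ A.pos
  pos_valid : ∀ s ∈ A.pos, ValidSeq A.lab A.just s
  equiv_mem : ∀ s t, A.equiv s t → s ∈ A.pos ∧ t ∈ A.pos
  equiv_refl : ∀ s ∈ A.pos, A.equiv s s
  equiv_symm : ∀ s t, A.equiv s t → A.equiv t s
  equiv_trans : ∀ s t u, A.equiv s t → A.equiv t u → A.equiv s u
  equiv_lab : ∀ s t, A.equiv s t → s.map A.lab = t.map A.lab
  equiv_prefix : ∀ s t s' t', A.equiv s t → s' <+: s → t' <+: t →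
      s'.length = t'.length → A.equiv s' t'
  equiv_ext : ∀ s t a, A.equiv s t → s ++ [a] ∈ A.pos → ∃ b, A.equiv (s ++ [a]) (t ++ [b])

/-- A strategy on a game: a non-empty set of even-length positions that is
causally consistent, representation independent and deterministic. -/
structure IsStrategy (A : Game) (σ : Set (List A.M)) : Prop where
  subset_pos : σ ⊆ A.pos
  even_length : ∀ s ∈ σ, Even s.length
  nonempty : σ.Nonempty
  causal : ∀ s a b, s ++ [a, b] ∈ σ → s ∈ σ
  repind : ∀ s t, s ∈ σ → A.equiv s t → t ∈ σ
  det : ∀ s t a b a' b', s ++ [a, b] ∈ σ → t ++ [a', b'] ∈ σ →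
      A.equiv (s ++ [a]) (t ++ [a']) → A.equiv (s ++ [a, b]) (t ++ [a', b'])

/-- A skeleton of a strategy `σ`: a non-empty, causally consistent subset of
`σ` satisfying Uniformization. -/
structure IsSkeletonOf (A : Game) (φ σ : Set (List A.M)) : Prop where
  nonempty : φ.Nonempty
  subset : φ ⊆ σ
  causal : ∀ s a b, s ++ [a, b] ∈ φ → s ∈ φ
  uniformization : ∀ s a b, s ++ [a, b] ∈ σ → s ∈ φ → ∃! b', s ++ [a, b'] ∈ φ

/-- A skeleton in the abstract sense (independently of any strategy):
a non-empty, causally consistent set of even-length positions satisfying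
Functional Determinacy and Functional Representation Independence. -/
structure IsSkeleton (A : Game) (φ : Set (List A.M)) : Prop where
  subset_pos : φ ⊆ A.pos
  even_length : ∀ s ∈ φ, Even s.length
  nonempty : φ.Nonempty
  causal : ∀ s a b, s ++ [a, b] ∈ φ → s ∈ φ
  funDet : ∀ s a b c, s ++ [a, b] ∈ φ → s ++ [a, c] ∈ φ → b = c
  funRepInd : ∀ s t a b a', s ++ [a, b] ∈ φ → t ∈ φ →
      A.equiv (s ++ [a]) (t ++ [a']) →
      ∃! b', t ++ [a', b'] ∈ φ ∧ A.equiv (s ++ [a, b]) (t ++ [a', b'])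

/-- `φ• = { t | ∃ s ∈ φ, s ≈_A t }`, the saturation of `φ` under `≈_A`. -/
def dot (A : Game) (φ : Set (List A.M)) : Set (List A.M) :=
  {t | ∃ s ∈ φ, A.equiv s t}

/-- The preorder `φ ⊑ ψ` on skeletons. -/
def Subeq (A : Game) (φ ψ : Set (List A.M)) : Prop :=
  ∀ s a b s' a', s ++ [a, b] ∈ φ → s' ∈ ψ → A.equiv (s ++ [a]) (s' ++ [a']) →
    ∃ b', s' ++ [a', b'] ∈ ψ ∧ A.equiv (s ++ [a, b]) (s' ++ [a', b'])

end Game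

/-- Auxiliary: the set of plays generated by the skeleton construction:
follow `s₀` whenever possible, otherwise use the choice function `f`. -/
inductive Gen {M : Type} (σ : Set (List M)) (s₀ : List M) (f : List M → M → M) :
    List M → Prop
  | nil : Gen σ s₀ f []
  | pref {t : List M} (a b : M) : Gen σ s₀ f t → (t ++ [a, b]) <+: s₀ →
      t ++ [a, b] ∈ σ → Gen σ s₀ f (t ++ [a, b])
  | ext {t : List M} (a b : M) : Gen σ s₀ f t →
      ¬(∃ b', (t ++ [a, b']) <+: s₀ ∧ t ++ [a, b'] ∈ σ) →
      t ++ [a, b] ∈ σ → b = f t a → Gen σ s₀ f (t ++ [a, b])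

lemma even_concat2 {M : Type} (l : List M) (he : Even l.length) (hne : l ≠ []) :
    ∃ t a b, l = t ++ [a, b] := by
  rcases (List.eq_nil_or_concat l) with h | ⟨l', b, rfl⟩
  · exact absurd h hne
  rcases (List.eq_nil_or_concat l') with h | ⟨l'', a, rfl⟩
  · subst h; simp at he
  exact ⟨l'', a, b, by simp⟩

lemma append_pair_inj {M : Type} {t u : List M} {a b a' b' : M}
    (h : t ++ [a, b] = u ++ [a', b']) : t = u ∧ a = a' ∧ b = b' := by
  have := List.append_inj' h rfl
  exact ⟨this.1, by simpa using this.2⟩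

end AJM

open AJM Game in
/-- Every strategy has a skeleton; moreover, for every play `s` of the
strategy there is a skeleton containing `s`. -/
theorem exists_skeleton (A : Game) (hA : A.Valid)
    (σ : Set (List A.M)) (hσ : IsStrategy A σ) :
    (∃ φ, IsSkeletonOf A φ σ) ∧ ∀ s ∈ σ, ∃ φ, IsSkeletonOf A φ σ ∧ s ∈ φ := by
  classical
  -- The empty play is in σ.
  have hnil : [] ∈ σ := by
    have key0 : ∀ n (s : List A.M), s.length ≤ n → s ∈ σ → [] ∈ σ := by
      intro n
      induction n with
      | zero =>
        intro s h hs
        have : s = [] := List.length_eq_zero_iff.mp (Nat.le_zero.mp h)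
        simpa [this] using hs
      | succ n ih =>
        intro s h hs
        by_cases hne : s = []
        · simpa [hne] using hs
        · obtain ⟨t, a, b, rfl⟩ := even_concat2 s (hσ.even_length s hs) hne
          have hlt : t.length ≤ n := by simp at h; omega
          exact ih t hlt (hσ.causal t a b hs)
    obtain ⟨s, hs⟩ := hσ.nonempty
    exact key0 s.length s le_rfl hs
  -- Even-length prefixes of plays in σ are in σ.
  have hpre : ∀ n, ∀ s ∈ σ, s.length ≤ n → ∀ u, u <+: s → Even u.length → u ∈ σ := by
    intro n
    induction n with
    | zero =>
      intro s hs h u hu _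
      have : s = [] := List.length_eq_zero_iff.mp (Nat.le_zero.mp h)
      subst this
      simpa [List.prefix_nil.mp hu]
    | succ n ih =>
      intro s hs h u hu he
      by_cases hus : u = s
      · simpa [hus] using hs
      · have hne : s ≠ [] := by
          rintro rfl
          exact hus (List.prefix_nil.mp hu)
        obtain ⟨t, a, b, rfl⟩ := even_concat2 s (hσ.even_length s hs) hne
        have hulen : u.length < (t ++ [a, b]).length := by
          rcases lt_or_eq_of_le hu.length_le with h' | h'
          · exact h'
          · exact absurd (hu.eq_of_length h') hus
        have hule : u.length ≤ t.length := by
          have het : Even (t ++ [a, b]).length := hσ.even_length _ hs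
          simp at hulen het ⊢
          rcases he with ⟨k, hk⟩
          rcases het with ⟨m, hm⟩
          omega
        have hut : u <+: t :=
          List.prefix_of_prefix_length_le hu (t.prefix_append _) hule
        have htσ : t ∈ σ := hσ.causal t a b hs
        have htlen : t.length ≤ n := by simp at h; omega
        exact ih t htσ htlen u hut he
  -- Main construction: skeleton through a given play s₀.
  have key : ∀ s₀ ∈ σ, ∃ φ, IsSkeletonOf A φ σ ∧ s₀ ∈ φ := by
    intro s₀ hs₀
    set f : List A.M → A.M → A.M :=
      fun t a => if h : ∃ b, t ++ [a, b] ∈ σ then h.choose else a with hf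
    refine ⟨{t | Gen σ s₀ f t}, ?_, ?_⟩
    · -- subset of σ
      have hsub : ∀ t, Gen σ s₀ f t → t ∈ σ := by
        intro t ht
        cases ht with
        | nil => exact hnil
        | pref a b _ _ h => exact h
        | ext a b _ _ h _ => exact h
      -- inversion
      have inv : ∀ (u : List A.M) (a c : A.M), Gen σ s₀ f (u ++ [a, c]) →
          Gen σ s₀ f u ∧ ((u ++ [a, c]) <+: s₀ ∨
            (¬(∃ b', (u ++ [a, b']) <+: s₀ ∧ u ++ [a, b'] ∈ σ) ∧ c = f u a)) := by
        intro u a c h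
        generalize hq : u ++ [a, c] = q at h
        cases h with
        | nil => simp at hq
        | pref a' b' hg hp hm =>
          obtain ⟨rfl, rfl, rfl⟩ := append_pair_inj hq.symm
          exact ⟨hg, Or.inl hp⟩
        | ext a' b' hg hnp hm heq =>
          obtain ⟨rfl, rfl, rfl⟩ := append_pair_inj hq.symm
          exact ⟨hg, Or.inr ⟨hnp, heq⟩⟩
      constructor
      · exact ⟨[], Gen.nil⟩
      · exact fun t ht => hsub t ht
      · exact fun s a b h => (inv s a b h).1
      · -- Uniformization
        intro s a b hmem hsφ
        have preuniq : ∀ b₁ b₂ : A.M, (s ++ [a, b₁]) <+: s₀ → (s ++ [a, b₂]) <+: s₀ →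
            b₁ = b₂ := by
          intro b₁ b₂ h1 h2
          have hlen : (s ++ [a, b₁]).length ≤ (s ++ [a, b₂]).length := by simp
          have := (List.prefix_of_prefix_length_le h1 h2 hlen).eq_of_length (by simp)
          exact (append_pair_inj this).2.2
        by_cases hp : ∃ b', (s ++ [a, b']) <+: s₀ ∧ s ++ [a, b'] ∈ σ
        · obtain ⟨b', h1, h2⟩ := hp
          refine ⟨b', Gen.pref a b' hsφ h1 h2, ?_⟩
          intro b'' hb''
          rcases (inv s a b'' hb'').2 with h | ⟨hn, _⟩
          · exact preuniq b'' b' h h1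
          · exact absurd ⟨b', h1, h2⟩ hn
        · have hex : ∃ b', s ++ [a, b'] ∈ σ := ⟨b, hmem⟩
          have hfa : s ++ [a, f s a] ∈ σ := by
            simp only [hf]
            rw [dif_pos hex]
            exact hex.choose_spec
          refine ⟨f s a, Gen.ext a (f s a) hsφ hp hfa rfl, ?_⟩
          intro b'' hb''
          rcases (inv s a b'' hb'').2 with h | ⟨_, heq⟩
          · exact absurd ⟨b'', h, hsub _ hb''⟩ hp
          · exact heq
    · -- s₀ itself is generated
      have gen_prefix : ∀ n (u : List A.M), u.length ≤ n → u <+: s₀ → Even u.length →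
          Gen σ s₀ f u := by
        intro n
        induction n with
        | zero =>
          intro u h _ _
          have : u = [] := List.length_eq_zero_iff.mp (Nat.le_zero.mp h)
          simpa [this] using Gen.nil (σ := σ) (s₀ := s₀) (f := f)
        | succ n ih =>
          intro u h hu he
          by_cases hne : u = []
          · simpa [hne] using Gen.nil (σ := σ) (s₀ := s₀) (f := f)
          · obtain ⟨t, a, b, rfl⟩ := even_concat2 u he hne
            have htpre : t <+: s₀ := (t.prefix_append _).trans hu
            have hte : Even t.length := by
              have hl : (t ++ [a, b]).length = t.length + 2 := by simp
              rw [hl] at he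
              rcases he with ⟨k, hk⟩
              exact ⟨k - 1, by omega⟩
            have htlen : t.length ≤ n := by
              simp only [List.length_append, List.length_cons, List.length_nil] at h
              omega
            have htg : Gen σ s₀ f t := ih t htlen htpre hte
            have huσ : t ++ [a, b] ∈ σ :=
              hpre s₀.length s₀ hs₀ le_rfl _ hu he
            exact Gen.pref a b htg hu huσ
      exact gen_prefix s₀.length s₀ le_rfl (List.prefix_refl s₀) (hσ.even_length s₀ hs₀)
  refine ⟨?_, fun s hs => key s hs⟩
  obtain ⟨s, hs⟩ := hσ.nonempty
  obtain ⟨φ, hφ, _⟩ := key s hs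
  exact ⟨φ, hφ⟩
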